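/- For every integer n, the matrix A = [[n,−1],[1,0]] ∈ GL₂(ℤ) satisfies ‖A‖ ≤ |n+1|. -/
import Mathlib


/-- The matrix `S₁ = [[1,-1],[0,-1]]` as an element of `GL₂(ℤ)`. -/
def S₁ : GL (Fin 2) ℤ := ⟨!![1, -1; 0, -1], !![1, -1; 0, -1], by decide, by decide⟩

/-- The matrix `S₂ = [[-1,0],[-1,1]]` as an element of `GL₂(ℤ)`. -/
def S₂ : GL (Fin 2) ℤ := ⟨!![-1, 0; -1, 1], !![-1, 0; -1, 1], by decide, by decide⟩

/-- The matrix `S₃ = [[0,1],[1,0]]` as an element of `GL₂(ℤ)`. -/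
def S₃ : GL (Fin 2) ℤ := ⟨!![0, 1; 1, 0], !![0, 1; 1, 0], by decide, by decide⟩

/-- The matrix `J = [[-1,0],[0,1]]` as an element of `GL₂(ℤ)`. -/
def Jmat : GL (Fin 2) ℤ := ⟨!![-1, 0; 0, 1], !![-1, 0; 0, 1], by decide, by decide⟩

/-- `SS k` is `Sₖ` for `k ∈ {1,2,3}` (junk value `1` otherwise). -/
def SS : ℕ → GL (Fin 2) ℤ
  | 1 => S₁
  | 2 => S₂
  | 3 => S₃
  | _ => 1

/-- `wordProd i n = S_{i 0} · J · S_{i 1} · J ⋯ S_{i (n-1)} · J · S_{i n}`,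
the alternating word with `n` factors `J` and `n+1` factors `S`. -/
def wordProd (i : ℕ → ℕ) : ℕ → GL (Fin 2) ℤ
  | 0 => SS (i 0)
  | n + 1 => wordProd i n * Jmat * SS (i (n + 1))

/-- The norm `|A|` of `A ∈ GL₂(ℤ)`: the number `n` of factors `J` in the (unique)
expression `A = ε · S_{i₀} · J · S_{i₁} · J ⋯ S_{i_{n-1}} · J · S_{i_n} · S₁^m` with
`ε ∈ {1,-1}`, `i₀, i_n ∈ {1,2,3}`, `i₁, …, i_{n-1} ∈ {1,2}`, `m ∈ {0,1}`. -/
noncomputable def matNorm (A : GL (Fin 2) ℤ) : ℕ :=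
  sInf {n | ∃ (ε : GL (Fin 2) ℤ) (i : ℕ → ℕ) (m : ℕ),
    (ε = 1 ∨ ε = -1) ∧
    (i 0 = 1 ∨ i 0 = 2 ∨ i 0 = 3) ∧
    (i n = 1 ∨ i n = 2 ∨ i n = 3) ∧
    (∀ k, 0 < k → k < n → i k = 1 ∨ i k = 2) ∧
    m ≤ 1 ∧
    A = ε * wordProd i n * S₁ ^ m}

/-- The conjugacy norm `‖A‖`: the minimum of `|B·A·B⁻¹|` over all `B ∈ GL₂(ℤ)`. -/
noncomputable def matNormConj (A : GL (Fin 2) ℤ) : ℕ :=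
  sInf {k | ∃ B : GL (Fin 2) ℤ, matNorm (B * A * B⁻¹) = k}

/-- The matrix `[[n,-1],[1,0]]` as an element of `GL₂(ℤ)`. -/
def specialMat (n : ℤ) : GL (Fin 2) ℤ :=
  ⟨!![n, -1; 1, 0], !![0, 1; -1, n],
    by ext i j; fin_cases i <;> fin_cases j <;>
      simp [Matrix.mul_apply, Fin.sum_univ_two],
    by ext i j; fin_cases i <;> fin_cases j <;>
      simp [Matrix.mul_apply, Fin.sum_univ_two]⟩


/-- Conjugator for the case `n ≥ -1`. -/
def Bpos : GL (Fin 2) ℤ := ⟨!![0, -1; -1, -1], !![1, -1; -1, 0], by decide, by decide⟩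

/-- Conjugator for the case `n ≤ -1`. -/
def Bneg : GL (Fin 2) ℤ := ⟨!![-1, -1; 0, -1], !![-1, 1; 0, -1], by decide, by decide⟩

lemma wordProd_two (N : ℕ) :
    (wordProd (fun _ => 2) N).val = !![-1, 0; -(N : ℤ) - 1, 1] := by
  induction N with
  | zero =>
    show (S₂).val = _
    norm_num [S₂]
  | succ N ih =>
    show ((wordProd (fun _ => 2) N) * Jmat * SS 2).val = _
    rw [Units.val_mul, Units.val_mul, ih]
    show _ * (Jmat).val * (S₂).val = _
    simp only [Jmat, S₂]
    ext i j
    fin_cases i <;> fin_cases j <;>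
      simp [Matrix.mul_apply, Fin.sum_univ_two] <;> push_cast <;> ring

lemma wordProd_neg (N : ℕ) :
    (wordProd (fun k => if k = 0 then 3 else 2) N).val = !![-(N : ℤ), 1; 1, 0] := by
  induction N with
  | zero =>
    show (SS (if 0 = 0 then 3 else 2)).val = _
    norm_num [SS, S₃]
  | succ N ih =>
    show ((wordProd _ N) * Jmat * SS (if N + 1 = 0 then 3 else 2)).val = _
    rw [Units.val_mul, Units.val_mul, ih]
    simp only [Nat.succ_ne_zero, if_false]
    show _ * (Jmat).val * (S₂).val = _
    simp only [Jmat, S₂]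
    ext i j
    fin_cases i <;> fin_cases j <;>
      simp [Matrix.mul_apply, Fin.sum_univ_two] <;> push_cast <;> ring

lemma matNorm_le_of_witness (A : GL (Fin 2) ℤ) (N : ℕ)
    (h : ∃ (ε : GL (Fin 2) ℤ) (i : ℕ → ℕ) (m : ℕ),
      (ε = 1 ∨ ε = -1) ∧
      (i 0 = 1 ∨ i 0 = 2 ∨ i 0 = 3) ∧
      (i N = 1 ∨ i N = 2 ∨ i N = 3) ∧
      (∀ k, 0 < k → k < N → i k = 1 ∨ i k = 2) ∧
      m ≤ 1 ∧
      A = ε * wordProd i N * S₁ ^ m) : matNorm A ≤ N :=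
  Nat.sInf_le h

lemma matNormConj_le (A B : GL (Fin 2) ℤ) : matNormConj A ≤ matNorm (B * A * B⁻¹) :=
  Nat.sInf_le ⟨B, rfl⟩

/-- For every integer `n`, the matrix `[[n,-1],[1,0]]` satisfies `‖A‖ ≤ |n+1|`. -/
theorem matNormConj_specialMat_le (n : ℤ) :
    matNormConj (specialMat n) ≤ (n + 1).natAbs := by
  rcases le_or_gt (-1) n with hn | hn
  · refine le_trans (matNormConj_le _ Bpos) (matNorm_le_of_witness _ _ ?_)
    refine ⟨1, fun _ => 2, 1, Or.inl rfl, by norm_num, by norm_num,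
      fun _ _ _ => Or.inr rfl, le_refl 1, ?_⟩
    have hN : ((n + 1).natAbs : ℤ) = n + 1 := Int.natAbs_of_nonneg (by omega)
    apply Units.ext
    rw [one_mul, pow_one, Units.val_mul, Units.val_mul, Units.val_mul, wordProd_two, hN]
    show (Bpos).val * (specialMat n).val * (Bpos).inv = _ * (S₁).val
    simp only [Bpos, specialMat, S₁]
    ext i j
    fin_cases i <;> fin_cases j <;>
      simp [Matrix.mul_apply, Fin.sum_univ_two] <;> ring
  · refine le_trans (matNormConj_le _ Bneg) (matNorm_le_of_witness _ _ ?_)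
    refine ⟨1, fun k => if k = 0 then 3 else 2, 1, Or.inl rfl, by norm_num, ?_,
      fun k hk _ => by simp [Nat.pos_iff_ne_zero.mp hk], le_refl 1, ?_⟩
    · by_cases h : (n + 1).natAbs = 0 <;> simp [h]
    · have hN : ((n + 1).natAbs : ℤ) = -(n + 1) := by omega
      apply Units.ext
      rw [one_mul, pow_one, Units.val_mul, Units.val_mul, Units.val_mul, wordProd_neg]
      show (Bneg).val * (specialMat n).val * (Bneg).inv = _ * (S₁).val
      simp only [Bneg, specialMat, S₁]
      ext i j
      fin_cases i <;> fin_cases j <;>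
        simp [Matrix.mul_apply, Fin.sum_univ_two, hN] <;> ring
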